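/- Let n ≥ 1 be an integer, let f be a polynomial with integer coefficients, and let ζ = e^{2πi/n}. Then ∏_{i=0}^{n−1} f(ζ^i) = ∏_{d ∣ n} N_{ℚ(ζ_d)/ℚ}(f(ζ_d)), where for each positive divisor d of n, ζ_d = e^{2πi/d} is a primitive dth root of unity and N_{ℚ(ζ_d)/ℚ} denotes the field norm from the cyclotomic field ℚ(ζ_d) to ℚ. -/

import Mathlib

open Polynomial IntermediateField

lemma norm_aeval_gen_eq_prod (d : ℕ) (hd : d ≠ 0) (f : Polynomial ℤ) :
    ((Algebra.norm ℚ
        (Polynomial.aeval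
          (IntermediateField.AdjoinSimple.gen ℚ
            (Complex.exp (2 * Real.pi * Complex.I / d))) f) : ℚ) : ℂ)
      = ∏ z ∈ primitiveRoots d ℂ, Polynomial.aeval z f := by
  set μ : ℂ := Complex.exp (2 * Real.pi * Complex.I / d) with hμdef
  have hμ : IsPrimitiveRoot μ d := Complex.isPrimitiveRoot_exp d hd
  have hint : IsIntegral ℚ μ := (hμ.isIntegral (Nat.pos_of_ne_zero hd)).tower_top
  haveI := IntermediateField.adjoin.finiteDimensional hint
  have hcast : ((Algebra.norm ℚ (Polynomial.aeval (AdjoinSimple.gen ℚ μ) f) : ℚ) : ℂ)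
      = algebraMap ℚ ℂ (Algebra.norm ℚ (Polynomial.aeval (AdjoinSimple.gen ℚ μ) f)) := rfl
  rw [hcast, Algebra.norm_eq_prod_embeddings]
  haveI : NeZero (d : ℂ) := ⟨Nat.cast_ne_zero.2 hd⟩
  have haroots : (minpoly ℚ μ).aroots ℂ = (primitiveRoots d ℂ).val := by
    rw [← Polynomial.cyclotomic_eq_minpoly_rat hμ (Nat.pos_of_ne_zero hd), Polynomial.aroots_def,
      Polynomial.map_cyclotomic, Polynomial.cyclotomic.roots_eq_primitiveRoots_val]
  set e := IntermediateField.algHomAdjoinIntegralEquiv ℚ (K := ℂ) hint with he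
  have key : ∀ σ : ℚ⟮μ⟯ →ₐ[ℚ] ℂ, σ (AdjoinSimple.gen ℚ μ) = (e σ : ℂ) := by
    intro σ
    conv_lhs => rw [← e.symm_apply_apply σ]
    exact IntermediateField.algHomAdjoinIntegralEquiv_symm_apply_gen ℚ hint (e σ)
  refine Finset.prod_bij (fun σ _ => σ (AdjoinSimple.gen ℚ μ)) ?_ ?_ ?_ ?_
  · intro σ _
    have h2 : (e σ : ℂ) ∈ (primitiveRoots d ℂ).val := by
      rw [← haroots]; exact (e σ).2
    show σ (AdjoinSimple.gen ℚ μ) ∈ primitiveRoots d ℂ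
    rw [key σ]
    exact Finset.mem_val.mp h2
  · intro σ _ τ _ h
    have h' : σ (AdjoinSimple.gen ℚ μ) = τ (AdjoinSimple.gen ℚ μ) := h
    rw [key σ, key τ] at h'
    exact e.injective (Subtype.ext h')
  · intro z hz
    have hz' : z ∈ (minpoly ℚ μ).aroots ℂ := by rw [haroots]; exact Finset.mem_val.mpr hz
    refine ⟨e.symm ⟨z, hz'⟩, Finset.mem_univ _, ?_⟩
    show (e.symm ⟨z, hz'⟩) (AdjoinSimple.gen ℚ μ) = z
    exact (key _).trans (congrArg Subtype.val (e.apply_symm_apply _))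
  · intro σ _
    exact (Polynomial.aeval_algHom_apply (σ.restrictScalars ℤ) (AdjoinSimple.gen ℚ μ) f).symm

/-- For a polynomial `f` with integer coefficients and `ζ = e^{2πi/n}`,
`∏_{i<n} f(ζ^i) = ∏_{d ∣ n} N_{ℚ(ζ_d)/ℚ}(f(ζ_d))`, where `ζ_d = e^{2πi/d}` and
`N_{ℚ(ζ_d)/ℚ}` is the field norm of the cyclotomic field `ℚ(ζ_d) ⊆ ℂ` over `ℚ`. -/
theorem stmt_18 (n : ℕ) (hn : 1 ≤ n) (f : Polynomial ℤ) :
    ∏ i ∈ Finset.range n,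
        Polynomial.aeval ((Complex.exp (2 * Real.pi * Complex.I / n)) ^ i) f =
      ((∏ d ∈ n.divisors,
          Algebra.norm ℚ
            (Polynomial.aeval
              (IntermediateField.AdjoinSimple.gen ℚ
                (Complex.exp (2 * Real.pi * Complex.I / d))) f) : ℚ) : ℂ) := by
  have hn0 : n ≠ 0 := by omega
  set ζ : ℂ := Complex.exp (2 * Real.pi * Complex.I / n) with hζdef
  have hζ : IsPrimitiveRoot ζ n := Complex.isPrimitiveRoot_exp n hn0
  -- rewrite RHS
  push_cast
  rw [Finset.prod_congr rfl (fun d hd =>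
    norm_aeval_gen_eq_prod d (Nat.pos_of_mem_divisors hd).ne' f)]
  -- rewrite LHS as a product over nth roots of unity
  have himage : Polynomial.nthRootsFinset n (1 : ℂ) = (Finset.range n).image (ζ ^ ·) := by
    ext z
    simp only [Polynomial.mem_nthRootsFinset (Nat.pos_of_ne_zero hn0), Finset.mem_image,
      Finset.mem_range]
    constructor
    · intro hz
      haveI : NeZero n := ⟨hn0⟩
      obtain ⟨i, hi, rfl⟩ := hζ.eq_pow_of_pow_eq_one hz
      exact ⟨i, hi, rfl⟩
    · rintro ⟨i, _, rfl⟩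
      rw [← pow_mul, mul_comm, pow_mul, hζ.pow_eq_one, one_pow]
  have hLHS : ∏ i ∈ Finset.range n, Polynomial.aeval (ζ ^ i) f
      = ∏ z ∈ Polynomial.nthRootsFinset n (1 : ℂ), Polynomial.aeval z f := by
    rw [himage, Finset.prod_image fun i hi j hj h => hζ.injOn_pow hi hj h]
  rw [hLHS, IsPrimitiveRoot.nthRoots_one_eq_biUnion_primitiveRoots,
    Finset.prod_biUnion fun i _ j _ hij => IsPrimitiveRoot.disjoint hij]
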